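/- Every element g of the pro-p Iwahori subgroup G of SL_n(ℤ_p) admits a unique triangular decomposition g = X·Z·Y, where X is lower unipotent with entries in p·ℤ_p below the diagonal, Z is diagonal in G with diagonal entries ≡ 1 mod p of determinant 1, and Y is upper unipotent with entries in ℤ_p above the diagonal. -/

import Mathlib

variable {p : ℕ} [Fact p.Prime]

theorem isUnitOfDvdSubOne {a : ℤ_[p]} (h : (p : ℤ_[p]) ∣ a - 1) : IsUnit a := by
  by_contra hu
  rw [PadicInt.not_isUnit_iff] at hu
  obtain ⟨k, hk⟩ := h
  have hp1 : ‖(p : ℤ_[p])‖ < 1 := by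
    rw [PadicInt.norm_p]
    have := (Fact.out : p.Prime).one_lt
    rw [inv_lt_one_iff₀]; right; exact_mod_cast this
  have h1 : ‖a - 1‖ < 1 := by
    rw [hk, norm_mul]
    calc ‖(p:ℤ_[p])‖ * ‖k‖ ≤ ‖(p:ℤ_[p])‖ * 1 :=
          mul_le_mul_of_nonneg_left (PadicInt.norm_le_one k) (norm_nonneg _)
      _ < 1 := by simpa using hp1
  have h2 : ‖(1:ℤ_[p])‖ ≤ max ‖a‖ ‖a - 1‖ := by
    calc ‖(1:ℤ_[p])‖ = ‖a + -(a-1)‖ := by ring_nf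
      _ ≤ max ‖a‖ ‖-(a-1)‖ := PadicInt.nonarchimedean _ _
      _ = max ‖a‖ ‖a-1‖ := by rw [norm_neg]
  rw [norm_one] at h2
  rcases max_cases ‖a‖ ‖a-1‖ with ⟨he, _⟩ | ⟨he, _⟩ <;> rw [he] at h2 <;> linarith

theorem iwahori_aux {n : ℕ} (g : Matrix (Fin n) (Fin n) ℤ_[p])
    (hlow : ∀ i j : Fin n, j < i → (p : ℤ_[p]) ∣ g i j)
    (hdiag : ∀ i : Fin n, (p : ℤ_[p]) ∣ (g i i - 1)) :
    ∃! T : Matrix (Fin n) (Fin n) ℤ_[p] × Matrix (Fin n) (Fin n) ℤ_[p] ×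
        Matrix (Fin n) (Fin n) ℤ_[p],
      (∀ i, T.1 i i = 1) ∧ (∀ i j : Fin n, i < j → T.1 i j = 0) ∧
      (∀ i j : Fin n, j < i → (p : ℤ_[p]) ∣ T.1 i j) ∧
      (∀ i j : Fin n, i ≠ j → T.2.1 i j = 0) ∧
      (∀ i, (p : ℤ_[p]) ∣ (T.2.1 i i - 1)) ∧
      (∀ i, T.2.2 i i = 1) ∧ (∀ i j : Fin n, j < i → T.2.2 i j = 0) ∧
      g = T.1 * T.2.1 * T.2.2 := by
  induction n with
  | zero =>
    refine ⟨(1, 1, 1), ⟨?_, ?_, ?_, ?_, ?_, ?_, ?_, ?_⟩, fun T _ => ?_⟩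
    · intro i; exact i.elim0
    · intro i j; exact i.elim0
    · intro i j; exact i.elim0
    · intro i j; exact i.elim0
    · intro i; exact i.elim0
    · intro i; exact i.elim0
    · intro i j; exact i.elim0
    · funext i; exact i.elim0
    · refine Prod.ext ?_ (Prod.ext ?_ ?_) <;> (funext i; exact i.elim0)
  | succ n ih =>
    set a : ℤ_[p] := g 0 0 with ha_def
    have ha : IsUnit a := isUnitOfDvdSubOne (hdiag 0)
    set ia : ℤ_[p] := Ring.inverse a with hia_def
    have hai : a * ia = 1 := Ring.mul_inverse_cancel a ha
    have hia : ia * a = 1 := Ring.inverse_mul_cancel a ha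
    have key : ∀ x y : ℤ_[p], x * ia * a * (ia * y) = x * ia * y := by
      intro x y
      rw [mul_assoc x ia a, hia, mul_one, mul_assoc]
    -- Schur complement
    set S : Matrix (Fin n) (Fin n) ℤ_[p] :=
      Matrix.of fun i j => g i.succ j.succ - g i.succ 0 * ia * g 0 j.succ with hS_def
    have hSlow : ∀ i j : Fin n, j < i → (p : ℤ_[p]) ∣ S i j := by
      intro i j hij
      exact dvd_sub (hlow i.succ j.succ (Fin.succ_lt_succ_iff.mpr hij))
        (Dvd.dvd.mul_right (Dvd.dvd.mul_right (hlow i.succ 0 i.succ_pos) _) _)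
    have hSdiag : ∀ i : Fin n, (p : ℤ_[p]) ∣ (S i i - 1) := by
      intro i
      have : S i i - 1 = (g i.succ i.succ - 1) - g i.succ 0 * ia * g 0 i.succ := by
        simp [hS_def]; ring
      rw [this]
      exact dvd_sub (hdiag i.succ)
        (Dvd.dvd.mul_right (Dvd.dvd.mul_right (hlow i.succ 0 i.succ_pos) _) _)
    obtain ⟨⟨X', Z', Y'⟩, ⟨h1', h2', h3', h4', h5', h6', h7', h8'⟩, huniq⟩ :=
      ih S hSlow hSdiag
    set d' : Fin n → ℤ_[p] := fun k => Z' k k with hd'_def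
    have hZ'd : Z' = Matrix.diagonal d' := by
      funext i j
      by_cases h : i = j
      · subst h; simp [Matrix.diagonal, hd'_def]
      · rw [Matrix.diagonal_apply_ne _ h]; exact h4' i j h
    set X : Matrix (Fin (n+1)) (Fin (n+1)) ℤ_[p] :=
      Matrix.of (Fin.cons (Fin.cons 1 0) (fun i => Fin.cons (g i.succ 0 * ia) (X' i)))
      with hX_def
    set d : Fin (n+1) → ℤ_[p] := Fin.cons a d' with hd_def
    set Z : Matrix (Fin (n+1)) (Fin (n+1)) ℤ_[p] := Matrix.diagonal d with hZ_def
    set Y : Matrix (Fin (n+1)) (Fin (n+1)) ℤ_[p] :=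
      Matrix.of (Fin.cons (Fin.cons 1 (fun j => ia * g 0 j.succ))
        (fun i => Fin.cons 0 (Y' i))) with hY_def
    have hprod3 : ∀ (A C : Matrix (Fin (n+1)) (Fin (n+1)) ℤ_[p]) (i j : Fin (n+1)),
        (A * Z * C) i j = ∑ k, A i k * d k * C k j := by
      intro A C i j
      rw [Matrix.mul_apply]
      simp [hZ_def, Matrix.mul_diagonal]
    have hprod3' : ∀ (i j : Fin n),
        (X' * Z' * Y') i j = ∑ k, X' i k * d' k * Y' k j := by
      intro i j
      rw [hZ'd, Matrix.mul_apply]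
      simp [Matrix.mul_diagonal]
    have hgS : g = X * Z * Y := by
      funext i j
      rw [hprod3]
      induction i using Fin.cases with
      | zero =>
        induction j using Fin.cases with
        | zero =>
          rw [Fin.sum_univ_succ]
          simp [hX_def, hY_def, hd_def, ha_def]
        | succ j =>
          rw [Fin.sum_univ_succ]
          simp [hX_def, hY_def, hd_def, ← mul_assoc, hai]
      | succ i =>
        induction j using Fin.cases with
        | zero =>
          rw [Fin.sum_univ_succ]
          simp [hX_def, hY_def, hd_def, mul_assoc, hia]
        | succ j =>
          rw [Fin.sum_univ_succ]
          have hsub : ∑ k : Fin n, X i.succ k.succ * d k.succ * Y k.succ j.succ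
              = S i j := by
            rw [h8', hprod3']
            simp [hX_def, hY_def, hd_def]
          rw [hsub]
          simp only [hX_def, hY_def, hd_def, Matrix.of_apply, Fin.cons_succ,
            Fin.cons_zero]
          rw [key]
          simp [hS_def]
    refine ⟨(X, Z, Y), ⟨?_, ?_, ?_, ?_, ?_, ?_, ?_, hgS⟩, ?_⟩
    · intro i
      induction i using Fin.cases with
      | zero => simp [hX_def]
      | succ i => simpa [hX_def] using h1' i
    · intro i j hij
      induction i using Fin.cases with
      | zero =>
        induction j using Fin.cases with
        | zero => exact absurd hij (lt_irrefl _)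
        | succ j => simp [hX_def]
      | succ i =>
        induction j using Fin.cases with
        | zero => exact absurd hij (by simp [Fin.not_lt_zero]) -- succ < 0 impossible
        | succ j =>
          simpa [hX_def] using h2' i j (by simpa [Fin.succ_lt_succ_iff] using hij)
    · intro i j hij
      induction i using Fin.cases with
      | zero => exact absurd hij (by simp [Fin.not_lt_zero])
      | succ i =>
        induction j using Fin.cases with
        | zero =>
          simpa [hX_def] using Dvd.dvd.mul_right (hlow i.succ 0 i.succ_pos) ia
        | succ j =>
          simpa [hX_def] using h3' i j (by simpa [Fin.succ_lt_succ_iff] using hij)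
    · intro i j hij
      exact Matrix.diagonal_apply_ne d hij
    · intro i
      induction i using Fin.cases with
      | zero => simpa [hZ_def, hd_def, ha_def] using hdiag 0
      | succ i => simpa [hZ_def, hd_def, hd'_def] using h5' i
    · intro i
      induction i using Fin.cases with
      | zero => simp [hY_def]
      | succ i => simpa [hY_def] using h6' i
    · intro i j hij
      induction i using Fin.cases with
      | zero => exact absurd hij (by simp [Fin.not_lt_zero])
      | succ i =>
        induction j using Fin.cases with
        | zero => simp [hY_def]
        | succ j =>
          simpa [hY_def] using h7' i j (by simpa [Fin.succ_lt_succ_iff] using hij)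
    · rintro ⟨X1, Z1, Y1⟩ ⟨k1, k2, k3, k4, k5, k6, k7, k8⟩
      simp only at k1 k2 k3 k4 k5 k6 k7 k8
      set d1 : Fin (n+1) → ℤ_[p] := fun k => Z1 k k with hd1_def
      have hZ1d : Z1 = Matrix.diagonal d1 := by
        funext i j
        by_cases h : i = j
        · subst h; simp [Matrix.diagonal, hd1_def]
        · rw [Matrix.diagonal_apply_ne _ h]; exact k4 i j h
      have hP : ∀ i j : Fin (n+1), g i j = ∑ k, X1 i k * d1 k * Y1 k j := by
        intro i j
        rw [k8, hZ1d, Matrix.mul_apply]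
        simp [Matrix.mul_diagonal]
      have hd10 : d1 0 = a := by
        have := hP 0 0
        rw [Fin.sum_univ_succ] at this
        simp only [k1, one_mul, k6, mul_one] at this
        have hz : ∀ k : Fin n, X1 0 k.succ * d1 k.succ * Y1 k.succ 0 = 0 := by
          intro k
          rw [k2 0 k.succ k.succ_pos, zero_mul, zero_mul]
        rw [Finset.sum_congr rfl (fun k _ => hz k), Finset.sum_const_zero,
          add_zero] at this
        rw [← this, ha_def]
      have hY10 : ∀ j : Fin n, Y1 0 j.succ = ia * g 0 j.succ := by
        intro j
        have := hP 0 j.succ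
        rw [Fin.sum_univ_succ] at this
        simp only [k1, one_mul, hd10] at this
        have hz : ∀ k : Fin n, X1 0 k.succ * d1 k.succ * Y1 k.succ j.succ = 0 := by
          intro k
          rw [k2 0 k.succ k.succ_pos, zero_mul, zero_mul]
        rw [Finset.sum_congr rfl (fun k _ => hz k), Finset.sum_const_zero,
          add_zero] at this
        rw [this, ← mul_assoc, hia, one_mul]
      have hX10 : ∀ i : Fin n, X1 i.succ 0 = g i.succ 0 * ia := by
        intro i
        have := hP i.succ 0
        rw [Fin.sum_univ_succ] at this
        simp only [k6, mul_one, hd10] at this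
        have hz : ∀ k : Fin n, X1 i.succ k.succ * d1 k.succ * Y1 k.succ 0 = 0 := by
          intro k
          rw [k7 k.succ 0 k.succ_pos, mul_zero]
        rw [Finset.sum_congr rfl (fun k _ => hz k), Finset.sum_const_zero,
          add_zero] at this
        rw [this, mul_assoc, hai, mul_one]
      -- the submatrices
      set X1' : Matrix (Fin n) (Fin n) ℤ_[p] :=
        Matrix.of fun i j => X1 i.succ j.succ with hX1'_def
      set Z1' : Matrix (Fin n) (Fin n) ℤ_[p] :=
        Matrix.of fun i j => Z1 i.succ j.succ with hZ1'_def
      set Y1' : Matrix (Fin n) (Fin n) ℤ_[p] :=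
        Matrix.of fun i j => Y1 i.succ j.succ with hY1'_def
      have hZ1'd : Z1' = Matrix.diagonal (fun k => d1 k.succ) := by
        funext i j
        by_cases h : i = j
        · subst h; simp [hZ1'_def, Matrix.diagonal, hd1_def]
        · rw [Matrix.diagonal_apply_ne _ h]
          exact k4 i.succ j.succ (fun hc => h (Fin.succ_injective _ hc))
      have hsubprod : S = X1' * Z1' * Y1' := by
        funext i j
        rw [hZ1'd, Matrix.mul_apply]
        simp only [Matrix.mul_diagonal, hX1'_def, hY1'_def, Matrix.of_apply]
        have := hP i.succ j.succ
        rw [Fin.sum_univ_succ] at this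
        rw [hd10, hX10 i, hY10 j, key] at this
        have : (∑ k : Fin n, X1 i.succ k.succ * d1 k.succ * Y1 k.succ j.succ)
            = g i.succ j.succ - g i.succ 0 * ia * g 0 j.succ := by
          rw [this]; ring
        rw [hS_def]
        simpa using this.symm
      have heq := huniq (X1', Z1', Y1')
        ⟨fun i => k1 i.succ,
         fun i j hij => k2 i.succ j.succ (Fin.succ_lt_succ_iff.mpr hij),
         fun i j hij => k3 i.succ j.succ (Fin.succ_lt_succ_iff.mpr hij),
         fun i j hij => k4 i.succ j.succ (fun hc => hij (Fin.succ_injective _ hc)),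
         fun i => k5 i.succ,
         fun i => k6 i.succ,
         fun i j hij => k7 i.succ j.succ (Fin.succ_lt_succ_iff.mpr hij),
         hsubprod⟩
      obtain ⟨hXe, hZe, hYe⟩ : X1' = X' ∧ Z1' = Z' ∧ Y1' = Y' := by
        simpa [Prod.ext_iff] using heq
      refine Prod.ext ?_ (Prod.ext ?_ ?_)
      · show X1 = X
        funext i j
        induction i using Fin.cases with
        | zero =>
          induction j using Fin.cases with
          | zero => rw [k1 0]; simp [hX_def]
          | succ j => rw [k2 0 j.succ j.succ_pos]; simp [hX_def]
        | succ i =>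
          induction j using Fin.cases with
          | zero => rw [hX10 i]; simp [hX_def]
          | succ j =>
            have := congrFun (congrFun hXe i) j
            simp only [hX1'_def, Matrix.of_apply] at this
            rw [this]; simp [hX_def]
      · show Z1 = Z
        have hd1d : d1 = d := by
          funext k
          induction k using Fin.cases with
          | zero => rw [hd10]; simp [hd_def]
          | succ k =>
            have h0 := congrFun (congrFun hZe k) k
            simp only [hZ1'_def, Matrix.of_apply] at h0
            show Z1 k.succ k.succ = d k.succ
            rw [h0]; simp [hd_def, hd'_def]
        rw [hZ1d, hZ_def, hd1d]
      · show Y1 = Y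
        funext i j
        induction i using Fin.cases with
        | zero =>
          induction j using Fin.cases with
          | zero => rw [k6 0]; simp [hY_def]
          | succ j => rw [hY10 j]; simp [hY_def]
        | succ i =>
          induction j using Fin.cases with
          | zero => rw [k7 i.succ 0 i.succ_pos]; simp [hY_def]
          | succ j =>
            have := congrFun (congrFun hYe i) j
            simp only [hY1'_def, Matrix.of_apply] at this
            rw [this]; simp [hY_def]

/-- Every element `g` of the pro-`p` Iwahori subgroup of `SL_n(ℤ_p)` has a unique
triangular decomposition `g = X·Z·Y` with `X` lower unipotent (below-diagonal entries in
`pℤ_p`), `Z` diagonal with entries `≡ 1 mod p` and determinant `1`, and `Y` upper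
unipotent. -/
theorem iwahori_triangular_decomposition {p n : ℕ} [Fact p.Prime]
    (g : Matrix (Fin n) (Fin n) ℤ_[p]) (hdet : g.det = 1)
    (hlow : ∀ i j : Fin n, j < i → (p : ℤ_[p]) ∣ g i j)
    (hdiag : ∀ i : Fin n, (p : ℤ_[p]) ∣ (g i i - 1)) :
    ∃! T : Matrix (Fin n) (Fin n) ℤ_[p] × Matrix (Fin n) (Fin n) ℤ_[p] ×
        Matrix (Fin n) (Fin n) ℤ_[p],
      (∀ i, T.1 i i = 1) ∧ (∀ i j : Fin n, i < j → T.1 i j = 0) ∧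
      (∀ i j : Fin n, j < i → (p : ℤ_[p]) ∣ T.1 i j) ∧
      (∀ i j : Fin n, i ≠ j → T.2.1 i j = 0) ∧
      (∀ i, (p : ℤ_[p]) ∣ (T.2.1 i i - 1)) ∧ T.2.1.det = 1 ∧
      (∀ i, T.2.2 i i = 1) ∧ (∀ i j : Fin n, j < i → T.2.2 i j = 0) ∧
      g = T.1 * T.2.1 * T.2.2 := by
  obtain ⟨T, ⟨h1, h2, h3, h4, h5, h6, h7, h8⟩, hU⟩ := iwahori_aux g hlow hdiag
  have hdetZ : ∀ T' : Matrix (Fin n) (Fin n) ℤ_[p] × Matrix (Fin n) (Fin n) ℤ_[p] ×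
      Matrix (Fin n) (Fin n) ℤ_[p],
      (∀ i, T'.1 i i = 1) → (∀ i j : Fin n, i < j → T'.1 i j = 0) →
      (∀ i, T'.2.2 i i = 1) → (∀ i j : Fin n, j < i → T'.2.2 i j = 0) →
      g = T'.1 * T'.2.1 * T'.2.2 → T'.2.1.det = 1 := by
    rintro ⟨X, Z, Y⟩ c1 c2 c6 c7 c8
    simp only at c1 c2 c6 c7 c8 ⊢
    have hX : X.det = 1 := by
      rw [Matrix.det_of_lowerTriangular X
        (fun i j hij => c2 i j (OrderDual.toDual_lt_toDual.mp hij))]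
      simp [c1]
    have hY : Y.det = 1 := by
      rw [Matrix.det_of_upperTriangular (fun i j hij => c7 i j hij)]
      simp [c6]
    rw [c8, Matrix.det_mul, Matrix.det_mul, hX, hY, one_mul, mul_one] at hdet
    exact hdet
  refine ⟨T, ⟨h1, h2, h3, h4, h5, hdetZ T h1 h2 h6 h7 h8, h6, h7, h8⟩, ?_⟩
  rintro T' ⟨c1, c2, c3, c4, c5, _, c6, c7, c8⟩
  exact hU T' ⟨c1, c2, c3, c4, c5, c6, c7, c8⟩
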